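/- Power bound for a two-bath engine: suppose W > 0, Q_h > 0, Q_c > 0 with Q_c = Q_h − W (first law) and efficiency η = W/Q_h ∈ (0,1), and suppose the cycle time satisfies Δt ≥ Q_c/(g r_c) + Q_h/(g r_h) with g, r_c, r_h > 0. Then the power P = W/Δt satisfies P ≤ g r_c η / (1 − η + r_c/r_h) < g r_h η. -/

import Mathlib

open Matrix MeasureTheory
open scoped ComplexOrder

noncomputable section

namespace QThermo

variable {ι : Type*} [Fintype ι] [DecidableEq ι]

/-- Matrix exponential. -/
def mexp (A : Matrix ι ι ℂ) : Matrix ι ι ℂ := NormedSpace.exp A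

/-- Gibbs state `ω_β(H) = e^{-βH}/Tr(e^{-βH})`. -/
def gibbs (β : ℝ) (H : Matrix ι ι ℂ) : Matrix ι ι ℂ :=
  (Matrix.trace (mexp ((-β : ℂ) • H)))⁻¹ • mexp ((-β : ℂ) • H)

/-- Matrix logarithm of a Hermitian matrix via its spectral decomposition
(junk value `0` on non-Hermitian inputs; eigenvalue `0` is sent to `Real.log 0 = 0`). -/
def mlog (A : Matrix ι ι ℂ) : Matrix ι ι ℂ :=
  if h : A.IsHermitian then
    (h.eigenvectorUnitary : Matrix ι ι ℂ) *
      Matrix.diagonal (fun i => (Real.log (h.eigenvalues i) : ℂ)) *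
      star (h.eigenvectorUnitary : Matrix ι ι ℂ)
  else 0

/-- von Neumann entropy `S(ρ) = -Tr(ρ log ρ)`. -/
def vNEntropy (ρ : Matrix ι ι ℂ) : ℝ := -(Matrix.trace (ρ * mlog ρ)).re

/-- Quantum relative entropy `S(ρ‖σ) = Tr(ρ (log ρ - log σ))`. -/
def relEntropy (ρ σ : Matrix ι ι ℂ) : ℝ := (Matrix.trace (ρ * (mlog ρ - mlog σ))).re

/-- Non-equilibrium free energy `F(ρ,H) = Tr(ρH) - (1/β) S(ρ)`. -/
def freeEnergy (β : ℝ) (ρ H : Matrix ι ι ℂ) : ℝ :=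
  (Matrix.trace (ρ * H)).re - (1 / β) * vNEntropy ρ

/-- A density matrix: positive semidefinite with unit trace. -/
def IsDensityMatrix (ρ : Matrix ι ι ℂ) : Prop := ρ.PosSemidef ∧ Matrix.trace ρ = 1


/-- power bound for a two-bath engine,
`P ≤ g r_c η / (1 − η + r_c/r_h) < g r_h η`. -/
theorem power_bound_engine (W Qh Qc g rc rh Δt : ℝ)
    (hW : 0 < W) (hQh : 0 < Qh) (hQc : 0 < Qc) (hfl : Qc = Qh - W)
    (hg : 0 < g) (hrc : 0 < rc) (hrh : 0 < rh)
    (hη : W / Qh < 1)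
    (hΔt : Qc / (g * rc) + Qh / (g * rh) ≤ Δt) :
    W / Δt ≤ g * rc * (W / Qh) / (1 - W / Qh + rc / rh) ∧
      g * rc * (W / Qh) / (1 - W / Qh + rc / rh) < g * rh * (W / Qh) := by
  have hT : 0 < Qc / (g * rc) + Qh / (g * rh) := by positivity
  have hΔt0 : 0 < Δt := lt_of_lt_of_le hT hΔt
  have hD : 0 < 1 - W / Qh + rc / rh := by
    have : 0 < rc / rh := by positivity
    linarith
  constructor
  · have h1 : W / Δt ≤ W / (Qc / (g * rc) + Qh / (g * rh)) :=
      div_le_div_of_nonneg_left hW.le hT hΔt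
    have h2 : W / (Qc / (g * rc) + Qh / (g * rh)) =
        g * rc * (W / Qh) / (1 - W / Qh + rc / rh) := by
      subst hfl
      field_simp
    linarith [h1, h2.symm ▸ h1]
  · rw [div_lt_iff₀ hD]
    have hη0 : 0 < W / Qh := by positivity
    have h1 : 0 < (1 - W / Qh) * (rh * (W / Qh)) := by
      apply mul_pos (by linarith) (by positivity)
    have key : g * rh * (W / Qh) * (1 - W / Qh + rc / rh)
        = g * rh * (W / Qh) * (1 - W / Qh) + g * rc * (W / Qh) := by
      field_simp
    have hpos : 0 < g * rh * (W / Qh) * (1 - W / Qh) := by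
      apply mul_pos (by positivity) (by linarith)
    linarith


end QThermo
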